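/- Let x = (-1,0), y = (1,0), o = (0,0), and let s₁, …, s_κ be points in the plane such that: (a) dist(s_i, x) ≥ 2 for all i; (b) dist(s_i, s_j) ≥ 2 for all i ≠ j; (c) for each i there is a point u_i with ‖u_i‖ ≤ 1, dist(s_i, x) ≥ dist(s_i, u_i), and dist(s_i, s_j) ≥ max(dist(s_i,u_i), dist(s_j,u_j)) for i ≠ j. Define p_i = s_i if ‖s_i‖ ≤ 3 and p_i = 3·s_i/‖s_i‖ otherwise, and p_0 = x. Then dist(p_i, p_j) ≥ 2 for all 0 ≤ i < j ≤ κ. -/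

import Mathlib

theorem stmt_12 (κ : ℕ)
    (x : EuclideanSpace ℝ (Fin 2))
    (hx : x = (EuclideanSpace.equiv (Fin 2) ℝ).symm ![-1, 0])
    (s u p : Fin κ → EuclideanSpace ℝ (Fin 2))
    (ha : ∀ i, dist (s i) x ≥ 2)
    (hb : ∀ i j, i ≠ j → dist (s i) (s j) ≥ 2)
    (hu : ∀ i, ‖u i‖ ≤ 1)
    (hsu : ∀ i, dist (s i) x ≥ dist (s i) (u i))
    (hss : ∀ i j, i ≠ j →
      dist (s i) (s j) ≥ max (dist (s i) (u i)) (dist (s j) (u j)))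
    (hp : ∀ i, p i = if ‖s i‖ ≤ 3 then s i else (3 / ‖s i‖) • s i) :
    (∀ i, dist x (p i) ≥ 2) ∧ ∀ i j, i ≠ j → dist (p i) (p j) ≥ 2 := by
  have hxnorm : ‖x‖ = 1 := by
    subst hx
    rw [EuclideanSpace.norm_eq]
    simp [Fin.sum_univ_two]
  have hsud : ∀ i, dist (s i) (u i) ≥ ‖s i‖ - 1 := by
    intro i
    have h1 := norm_sub_norm_le (s i) (u i)
    have h2 := hu i
    rw [dist_eq_norm]
    linarith
  have hpnorm : ∀ i, ¬ ‖s i‖ ≤ 3 → ‖p i‖ = 3 := by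
    intro i h
    have h3 : (3:ℝ) < ‖s i‖ := not_le.mp h
    rw [hp i, if_neg h, norm_smul, Real.norm_eq_abs,
      abs_of_pos (by positivity)]
    field_simp
  have hdsp : ∀ i, ¬ ‖s i‖ ≤ 3 → dist (s i) (p i) = ‖s i‖ - 3 := by
    intro i h
    have h3 : (3:ℝ) < ‖s i‖ := not_le.mp h
    rw [hp i, if_neg h, dist_eq_norm]
    have he : s i - (3/‖s i‖) • s i = (1 - 3/‖s i‖) • s i := by
      rw [sub_smul, one_smul]
    rw [he, norm_smul, Real.norm_eq_abs, abs_of_pos]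
    · field_simp
    · rw [sub_pos, div_lt_one (by linarith)]; linarith
  constructor
  · intro i
    by_cases h : ‖s i‖ ≤ 3
    · rw [hp i, if_pos h, dist_comm]; exact ha i
    · have h1 := hpnorm i h
      have h2 := norm_sub_norm_le (p i) x
      have h3 : dist x (p i) = ‖p i - x‖ := by rw [dist_comm, dist_eq_norm]
      linarith
  · intro i j hij
    have key : ∀ a b : Fin κ, a ≠ b → ¬ ‖s b‖ ≤ 3 →
        dist (s a) (s b) ≥ ‖s b‖ - 1 := by
      intro a b hab hb3
      have := hss a b hab
      have := le_max_right (dist (s a) (u a)) (dist (s b) (u b))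
      have := hsud b
      have hc : dist (s a) (s b) = dist (s b) (s a) := dist_comm _ _
      rw [dist_comm (s b) (u b)] at *
      linarith [hss a b hab, le_max_right (dist (s a) (u a)) (dist (s b) (u b)), hsud b]
    by_cases hi : ‖s i‖ ≤ 3 <;> by_cases hj : ‖s j‖ ≤ 3
    · rw [hp i, if_pos hi, hp j, if_pos hj]; exact hb i j hij
    · -- i inside, j outside
      have h1 : dist (s i) (s j) ≥ ‖s j‖ - 1 := key i j hij hj
      have h2 := hdsp j hj
      have h3 := dist_triangle (s i) (p j) (s j)
      rw [hp i, if_pos hi]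
      have h4 : dist (p j) (s j) = ‖s j‖ - 3 := by rw [dist_comm]; exact h2
      linarith
    · -- j inside, i outside
      have h1 : dist (s j) (s i) ≥ ‖s i‖ - 1 := key j i (Ne.symm hij) hi
      have h2 := hdsp i hi
      have h3 := dist_triangle (s j) (p i) (s i)
      rw [hp j, if_pos hj, dist_comm]
      have h4 : dist (p i) (s i) = ‖s i‖ - 3 := by rw [dist_comm]; exact h2
      linarith
    · -- both outside
      set a := s i with hai
      set b := s j with hbi
      have hA : (3:ℝ) < ‖a‖ := not_le.mp hi
      have hB : (3:ℝ) < ‖b‖ := not_le.mp hj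
      set A := ‖a‖
      set B := ‖b‖
      set t := (inner ℝ a b : ℝ) with ht
      have hd1 : dist a b ≥ A - 1 := by
        have := key j i (Ne.symm hij) hi
        rwa [dist_comm] at this
      have hd2 : dist a b ≥ B - 1 := key i j hij hj
      have hsq : dist a b ^ 2 = A^2 - 2*t + B^2 := by
        rw [dist_eq_norm, norm_sub_sq_real]
      have h1 : (A-1)^2 ≤ A^2 - 2*t + B^2 := by
        rw [← hsq]
        have : (0:ℝ) ≤ A - 1 := by linarith
        nlinarith [hd1]
      have h2 : (B-1)^2 ≤ A^2 - 2*t + B^2 := by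
        rw [← hsq]
        nlinarith [hd2]
      have hkey : 9 * t ≤ 7 * (A * B) := by
        rcases le_total A B with hAB | hAB
        · nlinarith [mul_nonneg (sub_nonneg.2 hAB) (by linarith : (0:ℝ) ≤ 14*A-18),
            mul_nonneg (by linarith : (0:ℝ) ≤ 5*A-3) (by linarith : (0:ℝ) ≤ A-3)]
        · nlinarith [mul_nonneg (sub_nonneg.2 hAB) (by linarith : (0:ℝ) ≤ 14*B-18),
            mul_nonneg (by linarith : (0:ℝ) ≤ 5*B-3) (by linarith : (0:ℝ) ≤ B-3)]
      have hpij : dist (p i) (p j) ^ 2 = 18 - 2 * ((3/A) * (3/B) * t) := by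
        rw [hp i, if_neg hi, hp j, if_neg hj, dist_eq_norm, norm_sub_sq_real,
          real_inner_smul_left, real_inner_smul_right, norm_smul, norm_smul,
          Real.norm_eq_abs, Real.norm_eq_abs,
          abs_of_pos (by positivity : (0:ℝ) < 3/A), abs_of_pos (by positivity : (0:ℝ) < 3/B)]
        have hA0 : A ≠ 0 := by positivity
        have hB0 : B ≠ 0 := by positivity
        rw [← ht, div_mul_cancel₀ (3:ℝ) hA0, div_mul_cancel₀ (3:ℝ) hB0]
        ring
      have hsq4 : dist (p i) (p j) ^ 2 ≥ 4 := by
        rw [hpij]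
        have hAB0 : (0:ℝ) < A * B := by positivity
        have he : (3/A) * (3/B) * t = 9 * t / (A * B) := by ring
        have h7 : 9 * t / (A * B) ≤ 7 := (div_le_iff₀ hAB0).2 (by linarith)
        rw [he]
        linarith
      have h0 : (0:ℝ) ≤ dist (p i) (p j) := dist_nonneg
      refine le_of_pow_le_pow_left₀ two_ne_zero h0 ?_
      calc (2:ℝ)^2 = 4 := by norm_num
        _ ≤ _ := hsq4
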